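/- Let D be a complete, cocomplete, extremally co-well-powered, (extremal epi, mono) category. Then KD is extremally co-well-powered. -/

import Mathlib

open CategoryTheory CategoryTheory.Limits

universe w v u v₂ u₂

namespace FilteredCats

variable {D : Type u} [Category.{v} D]

/-- The class of morphisms of `D` with source `X`. -/
def MorFrom (X : D) : Type (max u v) := Σ Y : D, X ⟶ Y

/-- `Dom δ₁ δ₂` means `δ₁ ≥ δ₂`: there is `h` with `h ∘ δ₁ = δ₂`. -/
def Dom {X : D} (δ₁ δ₂ : MorFrom X) : Prop :=
  ∃ h : δ₁.1 ⟶ δ₂.1, δ₁.2 ≫ h = δ₂.2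

/-- A projective filtration on `X`: a nonempty, directed, saturated class of
morphisms with source `X`. -/
structure ProjFilt (X : D) where
  carrier : Set (MorFrom X)
  nonempty' : carrier.Nonempty
  directed' : ∀ δ₁ ∈ carrier, ∀ δ₂ ∈ carrier, ∃ δ ∈ carrier, Dom δ δ₁ ∧ Dom δ δ₂
  saturated' : ∀ δ₁ ∈ carrier, ∀ δ₂, Dom δ₁ δ₂ → δ₂ ∈ carrier

/-- The pull back of a set of morphisms with source `X` along `f : X' ⟶ X`. -/
def pullSet {X' X : D} (f : X' ⟶ X) (S : Set (MorFrom X)) : Set (MorFrom X') :=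
  {δ' | ∃ δ ∈ S, δ' = ⟨δ.1, f ≫ δ.2⟩}

/-- The pull back of a projective filtration along `f : X' ⟶ X`. -/
def ProjFilt.pull {X' X : D} (f : X' ⟶ X) (P : ProjFilt X) : ProjFilt X' where
  carrier := pullSet f P.carrier
  nonempty' := by
    obtain ⟨δ, hδ⟩ := P.nonempty'
    exact ⟨⟨δ.1, f ≫ δ.2⟩, δ, hδ, rfl⟩
  directed' := by
    rintro _ ⟨δ₁, h₁, rfl⟩ _ ⟨δ₂, h₂, rfl⟩
    obtain ⟨δ, hδ, ⟨g₁, hg₁⟩, ⟨g₂, hg₂⟩⟩ := P.directed' δ₁ h₁ δ₂ h₂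
    exact ⟨⟨δ.1, f ≫ δ.2⟩, ⟨δ, hδ, rfl⟩,
      ⟨g₁, by simp [hg₁]⟩, ⟨g₂, by simp [hg₂]⟩⟩
  saturated' := by
    rintro _ ⟨δ, hδ, rfl⟩ δ₂ ⟨h, hh⟩
    refine ⟨⟨δ₂.1, δ.2 ≫ h⟩, P.saturated' δ hδ _ ⟨h, rfl⟩, ?_⟩
    obtain ⟨Y₂, g₂⟩ := δ₂
    have hg : g₂ = f ≫ (δ.2 ≫ h) := by simpa using hh.symm
    exact Sigma.ext rfl (heq_of_eq hg)

/-- A projectively filtered object of `D`. -/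
structure PObj (D : Type u) [Category.{v} D] where
  base : D
  filt : ProjFilt base

/-- A morphism of projectively filtered objects: a morphism of the underlying
objects such that the pull back of the target filtration is contained in the
source filtration. -/
structure PHom (A B : PObj D) : Type v where
  toHom : A.base ⟶ B.base
  mem : ∀ δ ∈ B.filt.carrier, (⟨δ.1, toHom ≫ δ.2⟩ : MorFrom A.base) ∈ A.filt.carrier

theorem PHom.ext' {A B : PObj D} {f g : PHom A B} (h : f.toHom = g.toHom) : f = g := by
  cases f; cases g; cases h; rfl

instance : Category.{v} (PObj D) where
  Hom := PHom
  id A := ⟨𝟙 A.base, fun δ hδ => by simp only [Category.id_comp]; exact hδ⟩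
  comp {A B C} f g := ⟨f.toHom ≫ g.toHom, fun δ hδ => by
    have h1 := g.mem δ hδ
    have h2 := f.mem _ h1
    simpa using h2⟩
  id_comp f := PHom.ext' (Category.id_comp _)
  comp_id f := PHom.ext' (Category.comp_id _)
  assoc f g h := PHom.ext' (Category.assoc _ _ _)

@[simp] theorem PObj.id_toHom (A : PObj D) : PHom.toHom (𝟙 A) = 𝟙 A.base := rfl
@[simp] theorem PObj.comp_toHom {A B C : PObj D} (f : A ⟶ B) (g : B ⟶ C) :
    PHom.toHom (f ≫ g) = PHom.toHom f ≫ PHom.toHom g := rfl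

/-- The forgetful functor `PD → D`. -/
def Pforget (D : Type u) [Category.{v} D] : PObj D ⥤ D where
  obj A := A.base
  map f := PHom.toHom f

/-- The discrete filtration functor `D → PD`, `X ↦ (X, M(X))`. -/
def Pdiscrete (D : Type u) [Category.{v} D] : D ⥤ PObj D where
  obj X :=
    { base := X
      filt :=
        { carrier := Set.univ
          nonempty' := ⟨⟨X, 𝟙 X⟩, trivial⟩
          directed' := fun δ₁ _ δ₂ _ =>
            ⟨⟨X, 𝟙 X⟩, trivial, ⟨δ₁.2, Category.id_comp _⟩, ⟨δ₂.2, Category.id_comp _⟩⟩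
          saturated' := fun _ _ _ _ => trivial } }
  map f := ⟨f, fun _ _ => trivial⟩

/-- The functor `PD → PE` induced by a functor `G : D → E`. -/
def Pfunctor {E : Type u₂} [Category.{v₂} E] (G : D ⥤ E) : PObj D ⥤ PObj E where
  obj A :=
    { base := G.obj A.base
      filt :=
        { carrier := {δ' | ∃ δ ∈ A.filt.carrier,
            Dom (⟨G.obj δ.1, G.map δ.2⟩ : MorFrom (G.obj A.base)) δ'}
          nonempty' := by
            obtain ⟨δ, hδ⟩ := A.filt.nonempty'
            exact ⟨⟨G.obj δ.1, G.map δ.2⟩, δ, hδ, ⟨𝟙 _, Category.comp_id _⟩⟩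
          directed' := by
            rintro δ'₁ ⟨δ₁, h₁, g₁, hg₁⟩ δ'₂ ⟨δ₂, h₂, g₂, hg₂⟩
            obtain ⟨δ, hδ, ⟨k₁, hk₁⟩, ⟨k₂, hk₂⟩⟩ := A.filt.directed' δ₁ h₁ δ₂ h₂
            refine ⟨⟨G.obj δ.1, G.map δ.2⟩, ⟨δ, hδ, ⟨𝟙 _, Category.comp_id _⟩⟩,
              ⟨G.map k₁ ≫ g₁, ?_⟩, ⟨G.map k₂ ≫ g₂, ?_⟩⟩
            · rw [← Category.assoc, ← G.map_comp, hk₁, hg₁]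
            · rw [← Category.assoc, ← G.map_comp, hk₂, hg₂]
          saturated' := by
            rintro δ'₁ ⟨δ, hδ, g, hg⟩ δ'₂ ⟨h, hh⟩
            exact ⟨δ, hδ, ⟨g ≫ h, by rw [← Category.assoc, hg, hh]⟩⟩ } }
  map {A B} f :=
    ⟨G.map (PHom.toHom f), by
      rintro δ' ⟨δ, hδ, g, hg⟩
      exact ⟨⟨δ.1, PHom.toHom f ≫ δ.2⟩, f.mem δ hδ,
        ⟨g, by rw [← hg, ← Category.assoc, ← G.map_comp]⟩⟩⟩
  map_id A := PHom.ext' (G.map_id _)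
  map_comp f g := PHom.ext' (G.map_comp _ _)

/-- An extremal epimorphism: an epimorphism such that in any factorisation
through a monomorphism, the monomorphism is an isomorphism. -/
def ExtremalEpi {C : Type u₂} [Category.{v₂} C] {X Y : C} (e : X ⟶ Y) : Prop :=
  Epi e ∧ ∀ ⦃Z : C⦄ (g : X ⟶ Z) (m : Z ⟶ Y), Mono m → g ≫ m = e → IsIso m

/-- An (extremal epi, mono) category: every morphism factors as an extremal
epimorphism followed by a monomorphism and such factorisations have the
diagonal fill-in property. -/
structure EMCat (C : Type u₂) [Category.{v₂} C] : Prop where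
  fact : ∀ {X Y : C} (f : X ⟶ Y), ∃ (Z : C) (e : X ⟶ Z) (m : Z ⟶ Y),
    ExtremalEpi e ∧ Mono m ∧ e ≫ m = f
  diag : ∀ {A B Z X : C} (e : A ⟶ B) (m : Z ⟶ X) (g : A ⟶ Z) (h : B ⟶ X),
    ExtremalEpi e → Mono m → g ≫ m = e ≫ h → ∃ d : B ⟶ Z, e ≫ d = g ∧ d ≫ m = h

/-- A projective filtration is reduced if it has an initial subclass of
extremal epimorphisms. -/
def ProjFilt.Reduced {X : D} (P : ProjFilt X) : Prop :=
  ∀ δ ∈ P.carrier, ∃ ε ∈ P.carrier, ExtremalEpi ε.2 ∧ Dom ε δ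

/-- The category of reduced projectively filtered objects of `D`. -/
def QObj (D : Type u) [Category.{v} D] := ObjectProperty.FullSubcategory (fun A : PObj D => A.filt.Reduced)

instance : Category.{v} (QObj D) := ObjectProperty.FullSubcategory.category _

/-- The inclusion functor `QD → PD`. -/
def qpInclusion (D : Type u) [Category.{v} D] : QObj D ⥤ PObj D :=
  ObjectProperty.ι _

/-- A category is extremally co-well-powered if every object has, up to
isomorphism, only a (small) set of extremal epimorphisms out of it. -/
def ECWP (C : Type u₂) [Category.{v₂} C] : Prop :=
  ∀ X : C, ∃ (ι : Type v₂) (Y : ι → C) (e : ∀ i, X ⟶ Y i),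
    (∀ i, ExtremalEpi (e i)) ∧
    ∀ ⦃Z : C⦄ (f : X ⟶ Z), ExtremalEpi f → ∃ (i : ι) (φ : Y i ≅ Z), e i ≫ φ.hom = f

/-- The category `(P, D)` associated to a projective filtration: objects are the
elements of `P`, morphisms `δ₁ → δ₂` are morphisms `g` of `D` with `g ∘ δ₁ = δ₂`. -/
def FiltCat {X : D} (P : ProjFilt X) : Type (max u v) := {δ : MorFrom X // δ ∈ P.carrier}

instance {X : D} (P : ProjFilt X) : Category.{v} (FiltCat P) where
  Hom δ₁ δ₂ := {g : δ₁.1.1 ⟶ δ₂.1.1 // δ₁.1.2 ≫ g = δ₂.1.2}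
  id δ := ⟨𝟙 _, Category.comp_id _⟩
  comp f g := ⟨f.1 ≫ g.1, by rw [← Category.assoc, f.2, g.2]⟩
  id_comp f := Subtype.ext (Category.id_comp _)
  comp_id f := Subtype.ext (Category.comp_id _)
  assoc f g h := Subtype.ext (Category.assoc _ _ _)

/-- The functor `(P, D) → D` sending an element of the filtration to its target. -/
def FiltDiagram {X : D} (P : ProjFilt X) : FiltCat P ⥤ D where
  obj δ := δ.1.1
  map g := g.1

/-- The canonical cone on the diagram of a projective filtration, with apex the
underlying object. -/
def filtCone {X : D} (P : ProjFilt X) : Limits.Cone (FiltDiagram P) where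
  pt := X
  π :=
    { app := fun δ => δ.1.2
      naturality := fun δ₁ δ₂ g => by
        have := g.2
        dsimp [FiltDiagram] at *
        simp [this] }

/-- A reduced projective filtration is an iso-filtration if the canonical cone
on its diagram is a limit cone, i.e. the limit exists and the canonical morphism
from the underlying object to it is an isomorphism. -/
def IsoFilt {X : D} (P : ProjFilt X) : Prop :=
  Nonempty (Limits.IsLimit (filtCone P))

/-- The category of iso-filtered objects of `D`. -/
def KObj (D : Type u) [Category.{v} D] :=
  ObjectProperty.FullSubcategory (fun A : QObj D => IsoFilt A.obj.filt)

instance : Category.{v} (KObj D) := ObjectProperty.FullSubcategory.category _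

/-- The inclusion functor `KD → QD`. -/
def kqInclusion (D : Type u) [Category.{v} D] : KObj D ⥤ QObj D :=
  ObjectProperty.ι _

/-- The forgetful functor `KD → D`. -/
def Kforget (D : Type u) [Category.{v} D] : KObj D ⥤ D :=
  kqInclusion D ⋙ qpInclusion D ⋙ Pforget D

/-- The smallest projective filtration containing a class of morphisms
(as a class). -/
def genSet {X : D} (S : Set (MorFrom X)) : Set (MorFrom X) :=
  {δ | ∀ P : ProjFilt X, S ⊆ P.carrier → δ ∈ P.carrier}

/-- The reduction of a class of morphisms: the saturation of the class of
extremal epimorphism parts of (extremal epi, mono)-factorisations of its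
elements. -/
def redSet {X : D} (S : Set (MorFrom X)) : Set (MorFrom X) :=
  {δ | ∃ ε : MorFrom X, ExtremalEpi ε.2 ∧
    (∃ δ' ∈ S, ∃ m : ε.1 ⟶ δ'.1, Mono m ∧ ε.2 ≫ m = δ'.2) ∧ Dom ε δ}

/-- The push forward of a filtration class along `f` (single morphism case). -/
def pushSet {X Y : D} (f : X ⟶ Y) (S : Set (MorFrom X)) : Set (MorFrom Y) :=
  {g | (⟨g.1, f ≫ g.2⟩ : MorFrom X) ∈ S}

/-- The discrete filtration on an object, as an iso-filtered object. -/
def kDiscreteObj (X : D) : KObj D where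
  obj :=
    { obj := (Pdiscrete D).obj X
      property := fun δ _ => ⟨⟨X, 𝟙 X⟩, trivial,
        ⟨(inferInstance : Epi (𝟙 X)), fun _ g m hm hgm => by
          haveI : IsSplitEpi m := ⟨⟨⟨g, hgm⟩⟩⟩
          exact isIso_of_mono_of_isSplitEpi m⟩,
        ⟨δ.2, Category.id_comp _⟩⟩ }
  property := ⟨{
    lift := fun c => c.π.app ⟨⟨X, 𝟙 X⟩, trivial⟩
    fac := fun c j => by
      have h := c.π.naturality (X := ⟨⟨X, 𝟙 X⟩, trivial⟩) (Y := j)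
        ⟨j.1.2, Category.id_comp _⟩
      dsimp [FiltDiagram, filtCone] at h ⊢
      exact h.symm.trans (Category.id_comp _)
    uniq := fun c m hm => by
      have h := hm ⟨⟨X, 𝟙 X⟩, trivial⟩
      rw [← Category.comp_id m]
      exact h }⟩

/-- The discrete filtration functor `D → KD`. -/
def kDiscrete (D : Type u) [Category.{v} D] : D ⥤ KObj D where
  obj X := kDiscreteObj X
  map f := ⟨⟨⟨f, fun _ _ => trivial⟩⟩⟩
  map_id _ := InducedCategory.hom_ext (InducedCategory.hom_ext (PHom.ext' rfl))
  map_comp _ _ := InducedCategory.hom_ext (InducedCategory.hom_ext (PHom.ext' rfl))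

/-- The morphism in `KD` from an iso-filtered object to the discrete object on
the target of an element of its filtration. -/
def kToDiscrete {A : KObj D} (δ : MorFrom A.obj.obj.base)
    (hδ : δ ∈ A.obj.obj.filt.carrier) : A ⟶ kDiscreteObj δ.1 :=
  ⟨⟨show PHom A.obj.obj ((kDiscreteObj δ.1).obj.obj) from
    ⟨δ.2, fun γ _ => A.obj.obj.filt.saturated' δ hδ _ ⟨γ.2, rfl⟩⟩⟩⟩

/-- The natural transformation `P(G) → P(H)` induced by `ν : G → H`. -/
def Pnat {E : Type u₂} [Category.{v₂} E] {G H : D ⥤ E} (ν : G ⟶ H) :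
    Pfunctor G ⟶ Pfunctor H where
  app A :=
    ⟨ν.app A.base, by
      rintro δ' ⟨δ, hδ, g, hg⟩
      exact ⟨δ, hδ, ⟨ν.app δ.1 ≫ g, by
        rw [← Category.assoc, ν.naturality, Category.assoc, hg]; rfl⟩⟩⟩
  naturality {A B} f := PHom.ext' (ν.naturality (PHom.toHom f))


/-! ### Auxiliary material for Statement 16 -/

section Aux

theorem Dom.trans {X : D} {δ₁ δ₂ δ₃ : MorFrom X} (h₁ : Dom δ₁ δ₂) (h₂ : Dom δ₂ δ₃) :
    Dom δ₁ δ₃ := by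
  obtain ⟨g, hg⟩ := h₁; obtain ⟨k, hk⟩ := h₂
  exact ⟨g ≫ k, by rw [← Category.assoc, hg, hk]⟩

theorem Dom.refl {X : D} (δ : MorFrom X) : Dom δ δ := ⟨𝟙 _, Category.comp_id _⟩

theorem ProjFilt.ext {X : D} {P Q : ProjFilt X} (h : P.carrier = Q.carrier) : P = Q := by
  cases P; cases Q; cases h; rfl

theorem extremalEpi_of_isIso {C : Type u₂} [Category.{v₂} C] {X Y : C} (e : X ⟶ Y)
    (he : IsIso e) : ExtremalEpi e := by
  refine ⟨inferInstance, fun Z g m hm hgm => ?_⟩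
  haveI : IsSplitEpi m := ⟨⟨⟨inv e ≫ g, by
    rw [Category.assoc, hgm, IsIso.inv_hom_id]⟩⟩⟩
  exact isIso_of_mono_of_isSplitEpi m

theorem extremalEpi_of_comp_iso {C : Type u₂} [Category.{v₂} C] {X Y Z : C}
    (f : X ⟶ Y) (m : Y ⟶ Z) (g : X ⟶ Z) (hg : ExtremalEpi g) (hm : IsIso m)
    (h : f ≫ m = g) : ExtremalEpi f := by
  constructor
  · constructor
    intro W c₁ c₂ hc
    have : g ≫ (inv m ≫ c₁) = g ≫ (inv m ≫ c₂) := by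
      rw [← h]; simp only [Category.assoc, IsIso.hom_inv_id_assoc]; rw [hc]
    have := hg.1.1 _ _ this
    calc c₁ = m ≫ (inv m ≫ c₁) := by simp
    _ = m ≫ (inv m ≫ c₂) := by rw [this]
    _ = c₂ := by simp
  · intro W g' m' hm' hfac
    have : (g' ≫ (m' ≫ m) = g) := by rw [← h, ← hfac, Category.assoc]
    have hiso : IsIso (m' ≫ m) := hg.2 g' (m' ≫ m) (mono_comp _ _) this
    have : m' = (m' ≫ m) ≫ inv m := by simp
    rw [this]; infer_instance

end Aux

/-- Packaged data witnessing extremal co-well-poweredness of `D`. -/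
structure ECWPData (D : Type u) [Category.{v} D] where
  idx : D → Type v
  T : ∀ X : D, idx X → D
  e : ∀ (X : D) (i : idx X), X ⟶ T X i
  ext : ∀ (X : D) (i : idx X), ExtremalEpi (e X i)
  cov : ∀ (X : D) ⦃Z : D⦄ (f : X ⟶ Z), ExtremalEpi f →
    ∃ (i : idx X) (φ : T X i ≅ Z), e X i ≫ φ.hom = f

noncomputable def ECWPData.of (h : ECWP D) : ECWPData D := by
  choose idx T e ext cov using h
  exact ⟨idx, T, e, ext, cov⟩

section RedPull

variable {Z Y : D}

/-- Every element of a pulled-back filtration is dominated by an element of the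
reduction of the pull-back. -/
theorem redSet_dom_of_pull (hEM : EMCat D) (m : Z ⟶ Y) (R : ProjFilt Y) {δ : MorFrom Z} (hδ : δ ∈ pullSet m R.carrier) :
    ∃ ε ∈ redSet (pullSet m R.carrier), ExtremalEpi ε.2 ∧ Dom ε δ := by
  obtain ⟨E, ε, μ, hε, hμ, hfac⟩ := hEM.fact δ.2
  refine ⟨⟨E, ε⟩, ⟨⟨E, ε⟩, hε, ⟨δ, hδ, μ, hμ, hfac⟩, Dom.refl _⟩, hε, ⟨μ, hfac⟩⟩

/-- The reduction of the pull-back of a filtration along a morphism, as a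
projective filtration. -/
def redPull (hEM : EMCat D) (m : Z ⟶ Y) (R : ProjFilt Y) : ProjFilt Z where
  carrier := redSet (pullSet m R.carrier)
  nonempty' := by
    obtain ⟨b, hb⟩ := R.nonempty'
    obtain ⟨ε, hε, _, _⟩ := redSet_dom_of_pull hEM m R
      (⟨b, hb, rfl⟩ : (⟨b.1, m ≫ b.2⟩ : MorFrom Z) ∈ pullSet m R.carrier)
    exact ⟨ε, hε⟩
  directed' := by
    rintro δ₁ ⟨ε₁, hε₁, ⟨δ'₁, hδ'₁, μ₁, hμ₁, hfac₁⟩, hd₁⟩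
      δ₂ ⟨ε₂, hε₂, ⟨δ'₂, hδ'₂, μ₂, hμ₂, hfac₂⟩, hd₂⟩
    obtain ⟨b₁, hb₁, rfl⟩ := hδ'₁
    obtain ⟨b₂, hb₂, rfl⟩ := hδ'₂
    obtain ⟨b, hb, ⟨u₁, hu₁⟩, ⟨u₂, hu₂⟩⟩ := R.directed' b₁ hb₁ b₂ hb₂
    obtain ⟨E, ε, μ, hε, hμ, hfac⟩ := hEM.fact (m ≫ b.2)
    have key : ∀ (T' : D) (b' : Y ⟶ T') (u : b.1 ⟶ T') (ε' : MorFrom Z)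
        (μ' : ε'.1 ⟶ T'), b.2 ≫ u = b' → ExtremalEpi ε'.2 → Mono μ' →
        ε'.2 ≫ μ' = m ≫ b' → Dom (⟨E, ε⟩ : MorFrom Z) ε' := by
      intro T' b' u ε' μ' hu hε' hμ' hfac'
      have hsq : ε'.2 ≫ μ' = ε ≫ (μ ≫ u) := by
        rw [hfac', ← hu, ← Category.assoc, ← hfac, Category.assoc]
      obtain ⟨d, hd, -⟩ := hEM.diag ε μ' ε'.2 (μ ≫ u) hε hμ' hsq
      exact ⟨d, hd⟩
    have k₁ : Dom (⟨E, ε⟩ : MorFrom Z) ε₁ :=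
      key _ b₁.2 u₁ ε₁ μ₁ hu₁ hε₁ hμ₁ hfac₁
    have k₂ : Dom (⟨E, ε⟩ : MorFrom Z) ε₂ :=
      key _ b₂.2 u₂ ε₂ μ₂ hu₂ hε₂ hμ₂ hfac₂
    exact ⟨⟨E, ε⟩, ⟨⟨E, ε⟩, hε, ⟨⟨b.1, m ≫ b.2⟩, ⟨b, hb, rfl⟩, μ, hμ, hfac⟩, Dom.refl _⟩,
      k₁.trans hd₁, k₂.trans hd₂⟩
  saturated' := by
    rintro δ₁ ⟨ε, hε, hf, hd⟩ δ₂ hd₂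
    exact ⟨ε, hε, hf, hd.trans hd₂⟩

theorem redPull_reduced (hEM : EMCat D) (m : Z ⟶ Y) (R : ProjFilt Y) : (redPull hEM m R).Reduced := by
  rintro δ ⟨ε, hε, hf, hd⟩
  exact ⟨ε, ⟨ε, hε, hf, Dom.refl _⟩, hε, hd⟩

theorem pull_mem_redPull (hEM : EMCat D) (m : Z ⟶ Y) (R : ProjFilt Y) {b : MorFrom Y} (hb : b ∈ R.carrier) :
    (⟨b.1, m ≫ b.2⟩ : MorFrom Z) ∈ (redPull hEM m R).carrier := by
  obtain ⟨ε, hε, -, hd⟩ := redSet_dom_of_pull hEM m R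
    (⟨b, hb, rfl⟩ : (⟨b.1, m ≫ b.2⟩ : MorFrom Z) ∈ pullSet m R.carrier)
  exact (redPull hEM m R).saturated' ε hε _ hd

end RedPull

section LimitConstr

variable [Limits.HasLimits D] {W : D}

/-- The small index category of extremal epimorphisms (from the chosen
representative set) belonging to a filtration. -/
def JCat (E : ECWPData D) (Q : ProjFilt W) : Type v :=
  {j : E.idx W // (⟨E.T W j, E.e W j⟩ : MorFrom W) ∈ Q.carrier}

instance (E : ECWPData D) (Q : ProjFilt W) : Category.{v} (JCat E Q) where
  Hom j k := {u : E.T W j.1 ⟶ E.T W k.1 // E.e W j.1 ≫ u = E.e W k.1}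
  id j := ⟨𝟙 _, Category.comp_id _⟩
  comp f g := ⟨f.1 ≫ g.1, by rw [← Category.assoc, f.2, g.2]⟩
  id_comp f := Subtype.ext (Category.id_comp _)
  comp_id f := Subtype.ext (Category.comp_id _)
  assoc f g h := Subtype.ext (Category.assoc _ _ _)

/-- The small diagram associated to a reduced filtration. -/
def Jdiag (E : ECWPData D) (Q : ProjFilt W) : JCat E Q ⥤ D where
  obj j := E.T W j.1
  map u := u.1

/-- Every element of a reduced filtration is dominated by a representative
extremal epimorphism in the filtration. -/
theorem redDet (E : ECWPData D) (Q : ProjFilt W) (hQ : Q.Reduced)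
    {δ : MorFrom W} (hδ : δ ∈ Q.carrier) :
    ∃ j : JCat E Q, Dom ⟨E.T W j.1, E.e W j.1⟩ δ := by
  obtain ⟨ε, hε, hee, h, hd⟩ := hQ δ hδ
  obtain ⟨i, φ, hφ⟩ := E.cov W ε.2 hee
  have hmem : (⟨E.T W i, E.e W i⟩ : MorFrom W) ∈ Q.carrier :=
    Q.saturated' ε hε _ ⟨φ.inv, by rw [← hφ, Category.assoc, Iso.hom_inv_id,
      Category.comp_id]⟩
  exact ⟨⟨i, hmem⟩, ⟨φ.hom ≫ h, by rw [← Category.assoc, hφ, hd]⟩⟩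

/-- The candidate limit object of the diagram of a reduced filtration. -/
noncomputable def LL (E : ECWPData D) (Q : ProjFilt W) : D := limit (Jdiag E Q)

/-- The legs of the candidate limit cone. -/
noncomputable def leg (E : ECWPData D) (Q : ProjFilt W) (hQ : Q.Reduced)
    (δ : MorFrom W) (hδ : δ ∈ Q.carrier) : LL E Q ⟶ δ.1 :=
  limit.π (Jdiag E Q) (redDet E Q hQ hδ).choose ≫
    (redDet E Q hQ hδ).choose_spec.choose

/-- The leg at `δ` agrees with any representative factorisation. -/
theorem leg_eq (E : ECWPData D) (Q : ProjFilt W) (hQ : Q.Reduced)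
    {δ : MorFrom W} (hδ : δ ∈ Q.carrier) (j : JCat E Q)
    (h : E.T W j.1 ⟶ δ.1) (hh : E.e W j.1 ≫ h = δ.2) :
    leg E Q hQ δ hδ = limit.π (Jdiag E Q) j ≫ h := by
  set j₀ := (redDet E Q hQ hδ).choose with hj₀
  obtain hh₀ := (redDet E Q hQ hδ).choose_spec.choose_spec
  set h₀ := (redDet E Q hQ hδ).choose_spec.choose with hh₀def
  obtain ⟨γ, hγ, d₀, d₁⟩ := Q.directed' ⟨E.T W j₀.1, E.e W j₀.1⟩ j₀.2
    ⟨E.T W j.1, E.e W j.1⟩ j.2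
  obtain ⟨j₃, d₃⟩ := redDet E Q hQ hγ
  obtain ⟨u₀, hu₀⟩ := d₃.trans d₀
  obtain ⟨u₁, hu₁⟩ := d₃.trans d₁
  have w₀ : limit.π (Jdiag E Q) j₃ ≫ u₀ = limit.π (Jdiag E Q) j₀ :=
    limit.w (Jdiag E Q) (⟨u₀, hu₀⟩ : j₃ ⟶ j₀)
  have w₁ : limit.π (Jdiag E Q) j₃ ≫ u₁ = limit.π (Jdiag E Q) j :=
    limit.w (Jdiag E Q) (⟨u₁, hu₁⟩ : j₃ ⟶ j)
  have hepi : Epi (E.e W j₃.1) := (E.ext W j₃.1).1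
  have key : u₀ ≫ h₀ = u₁ ≫ h := by
    apply hepi.1
    rw [← Category.assoc, ← Category.assoc, hu₀, hu₁, hh₀, hh]
  show limit.π (Jdiag E Q) j₀ ≫ h₀ = limit.π (Jdiag E Q) j ≫ h
  rw [← w₀, ← w₁]
  exact (Category.assoc _ _ _).trans ((congrArg (limit.π (Jdiag E Q) j₃ ≫ ·) key).trans
    (Category.assoc _ _ _).symm)

theorem leg_fac (E : ECWPData D) (Q : ProjFilt W) (hQ : Q.Reduced)
    {δ δ' : MorFrom W} (hδ : δ ∈ Q.carrier) (hδ' : δ' ∈ Q.carrier)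
    (u : δ.1 ⟶ δ'.1) (hu : δ.2 ≫ u = δ'.2) :
    leg E Q hQ δ hδ ≫ u = leg E Q hQ δ' hδ' := by
  obtain ⟨j, h, hh⟩ := redDet E Q hQ hδ
  rw [leg_eq E Q hQ hδ j h hh]
  exact (Category.assoc _ _ _).trans (leg_eq E Q hQ hδ' j (h ≫ u)
    ((Category.assoc _ _ _).symm.trans ((congrArg (· ≫ u) hh).trans hu))).symm

theorem leg_self (E : ECWPData D) (Q : ProjFilt W) (hQ : Q.Reduced) (j : JCat E Q) :
    leg E Q hQ ⟨E.T W j.1, E.e W j.1⟩ j.2 = limit.π (Jdiag E Q) j := by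
  rw [leg_eq E Q hQ j.2 j (𝟙 _) (Category.comp_id _)]
  exact Category.comp_id _

/-- The canonical morphism from `W` to the candidate limit. -/
noncomputable def ell (E : ECWPData D) (Q : ProjFilt W) : W ⟶ LL E Q :=
  limit.lift (Jdiag E Q)
    { pt := W
      π := { app := fun j => E.e W j.1
             naturality := fun j k u => by
               have := u.2
               dsimp [Jdiag] at *
               simp [this] } }

theorem ell_leg (E : ECWPData D) (Q : ProjFilt W) (hQ : Q.Reduced)
    {δ : MorFrom W} (hδ : δ ∈ Q.carrier) :
    ell E Q ≫ leg E Q hQ δ hδ = δ.2 := by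
  obtain ⟨j, h, hh⟩ := redDet E Q hQ hδ
  rw [leg_eq E Q hQ hδ j h hh]
  have : ell E Q ≫ limit.π (Jdiag E Q) j = E.e W j.1 := limit.lift_π _ _
  exact (Category.assoc _ _ _).symm.trans ((congrArg (· ≫ h) this).trans hh)

/-- The candidate limit cone on the (large) diagram of a reduced filtration. -/
noncomputable def limCone (E : ECWPData D) (Q : ProjFilt W) (hQ : Q.Reduced) :
    Limits.Cone (FiltDiagram Q) where
  pt := LL E Q
  π :=
    { app := fun δ => leg E Q hQ δ.1 δ.2
      naturality := fun δ₁ δ₂ g => by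
        dsimp [FiltDiagram]
        rw [Category.id_comp]
        exact (leg_fac E Q hQ δ₁.2 δ₂.2 g.1 g.2).symm }

/-- The candidate cone is a limit cone. -/
noncomputable def limConeIsLimit (E : ECWPData D) (Q : ProjFilt W) (hQ : Q.Reduced) :
    Limits.IsLimit (limCone E Q hQ) where
  lift c := limit.lift (Jdiag E Q)
    { pt := c.pt
      π := { app := fun j => c.π.app ⟨⟨E.T W j.1, E.e W j.1⟩, j.2⟩
             naturality := fun j k u => by
               have := c.π.naturality
                 (X := ⟨⟨E.T W j.1, E.e W j.1⟩, j.2⟩)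
                 (Y := ⟨⟨E.T W k.1, E.e W k.1⟩, k.2⟩) ⟨u.1, u.2⟩
               dsimp [Jdiag, FiltDiagram] at this ⊢
               simpa using (Category.id_comp _).symm.trans this } }
  fac c δ := by
    obtain ⟨j, h, hh⟩ := redDet E Q hQ δ.2
    show _ ≫ leg E Q hQ δ.1 δ.2 = _
    rw [leg_eq E Q hQ δ.2 j h hh]
    refine (Category.assoc _ _ _).symm.trans ((congrArg (· ≫ h) (limit.lift_π _ _)).trans ?_)
    have := c.π.naturality (X := ⟨⟨E.T W j.1, E.e W j.1⟩, j.2⟩) (Y := δ) ⟨h, hh⟩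
    dsimp [FiltDiagram] at this
    simpa using ((Category.id_comp _).symm.trans this).symm
  uniq c v hv := by
    refine limit.hom_ext (F := Jdiag E Q) fun j => ?_
    rw [limit.lift_π]
    have := hv ⟨⟨E.T W j.1, E.e W j.1⟩, j.2⟩
    rw [← leg_self E Q hQ j]
    exact this

/-- The induced filtration on the limit object. -/
noncomputable def QL (E : ECWPData D) (Q : ProjFilt W) (hQ : Q.Reduced) :
    ProjFilt (LL E Q) where
  carrier := {δL | ∃ (γ : MorFrom W) (hγ : γ ∈ Q.carrier),
    Dom ⟨γ.1, leg E Q hQ γ hγ⟩ δL}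
  nonempty' := by
    obtain ⟨γ, hγ⟩ := Q.nonempty'
    exact ⟨⟨γ.1, leg E Q hQ γ hγ⟩, γ, hγ, Dom.refl _⟩
  directed' := by
    rintro δ₁ ⟨γ₁, hγ₁, d₁⟩ δ₂ ⟨γ₂, hγ₂, d₂⟩
    obtain ⟨γ, hγ, ⟨u₁, hu₁⟩, ⟨u₂, hu₂⟩⟩ := Q.directed' γ₁ hγ₁ γ₂ hγ₂
    refine ⟨⟨γ.1, leg E Q hQ γ hγ⟩, ⟨γ, hγ, Dom.refl _⟩, ?_, ?_⟩
    · exact (Dom.trans ⟨u₁, leg_fac E Q hQ hγ hγ₁ u₁ hu₁⟩ d₁)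
    · exact (Dom.trans ⟨u₂, leg_fac E Q hQ hγ hγ₂ u₂ hu₂⟩ d₂)
  saturated' := by
    rintro δ₁ ⟨γ, hγ, d⟩ δ₂ hd₂
    exact ⟨γ, hγ, d.trans hd₂⟩

theorem QL_mem_leg (E : ECWPData D) (Q : ProjFilt W) (hQ : Q.Reduced)
    {γ : MorFrom W} (hγ : γ ∈ Q.carrier) :
    (⟨γ.1, leg E Q hQ γ hγ⟩ : MorFrom (LL E Q)) ∈ (QL E Q hQ).carrier :=
  ⟨γ, hγ, Dom.refl _⟩

theorem leg_extremal (E : ECWPData D) (Q : ProjFilt W) (hQ : Q.Reduced)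
    {ε : MorFrom W} (hε : ε ∈ Q.carrier) (hee : ExtremalEpi ε.2) :
    ExtremalEpi (leg E Q hQ ε hε) := by
  have hl : ell E Q ≫ leg E Q hQ ε hε = ε.2 := ell_leg E Q hQ hε
  constructor
  · constructor
    intro V c₁ c₂ hc
    apply hee.1.1
    rw [← hl, Category.assoc, Category.assoc, hc]
  · intro V g m' hm' hfac
    exact hee.2 (ell E Q ≫ g) m' hm' (by rw [Category.assoc, hfac, hl])

theorem QL_reduced (E : ECWPData D) (Q : ProjFilt W) (hQ : Q.Reduced) :
    (QL E Q hQ).Reduced := by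
  rintro δL ⟨γ, hγ, d⟩
  obtain ⟨ε, hε, hee, u, hu⟩ := hQ γ hγ
  refine ⟨⟨ε.1, leg E Q hQ ε hε⟩, QL_mem_leg E Q hQ hε,
    leg_extremal E Q hQ hε hee, ?_⟩
  exact Dom.trans ⟨u, leg_fac E Q hQ hε hγ u hu⟩ d

/-- Restriction of a cone on the limit filtration diagram to the original
filtration diagram. -/
noncomputable def coneOf (E : ECWPData D) (Q : ProjFilt W) (hQ : Q.Reduced)
    (c : Limits.Cone (FiltDiagram (QL E Q hQ))) : Limits.Cone (FiltDiagram Q) :=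
    { pt := c.pt
      π := { app := fun γ => c.π.app ⟨⟨γ.1.1, leg E Q hQ γ.1 γ.2⟩,
               QL_mem_leg E Q hQ γ.2⟩
             naturality := fun γ₁ γ₂ u => by
               have := c.π.naturality
                 (X := ⟨⟨γ₁.1.1, leg E Q hQ γ₁.1 γ₁.2⟩, QL_mem_leg E Q hQ γ₁.2⟩)
                 (Y := ⟨⟨γ₂.1.1, leg E Q hQ γ₂.1 γ₂.2⟩, QL_mem_leg E Q hQ γ₂.2⟩)
                 ⟨u.1, leg_fac E Q hQ γ₁.2 γ₂.2 u.1 u.2⟩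
               dsimp [FiltDiagram] at this ⊢
               simpa using (Category.id_comp _).symm.trans this } }

theorem QL_isoFilt (E : ECWPData D) (Q : ProjFilt W) (hQ : Q.Reduced) :
    IsoFilt (QL E Q hQ) := by
  refine ⟨?_⟩
  refine
    { lift := fun c => (limConeIsLimit E Q hQ).lift (coneOf E Q hQ c)
      fac := fun c δ => ?_
      uniq := fun c v hv => ?_ }
  · obtain ⟨γ, hγ, h, hh⟩ := δ.2
    have hfac := (limConeIsLimit E Q hQ).fac (coneOf E Q hQ c) ⟨γ, hγ⟩
    have hnat := c.π.naturality
      (X := ⟨⟨γ.1, leg E Q hQ γ hγ⟩, QL_mem_leg E Q hQ hγ⟩)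
      (Y := δ) ⟨h, hh⟩
    dsimp [FiltDiagram, filtCone, limCone, coneOf] at hfac hnat ⊢
    rw [← hh, ← Category.assoc, hfac]
    simpa using ((Category.id_comp _).symm.trans hnat).symm
  · apply (limConeIsLimit E Q hQ).uniq (coneOf E Q hQ c)
    intro γ
    have := hv ⟨⟨γ.1.1, leg E Q hQ γ.1 γ.2⟩, QL_mem_leg E Q hQ γ.2⟩
    dsimp [filtCone] at this
    exact this

/-- The iso-filtered object associated to a reduced filtration. -/
noncomputable def mkKObj (E : ECWPData D) (Q : ProjFilt W) (hQ : Q.Reduced) :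
    KObj D :=
  ⟨⟨⟨LL E Q, QL E Q hQ⟩, QL_reduced E Q hQ⟩, QL_isoFilt E Q hQ⟩

theorem carrier_eq_dom_set (E : ECWPData D) (Q : ProjFilt W) (hQ : Q.Reduced) :
    Q.carrier = {δ | ∃ j : E.idx W,
      (⟨E.T W j, E.e W j⟩ : MorFrom W) ∈ Q.carrier ∧
      Dom ⟨E.T W j, E.e W j⟩ δ} := by
  ext δ
  constructor
  · intro hδ
    obtain ⟨j, d⟩ := redDet E Q hQ hδ
    exact ⟨j.1, j.2, d⟩
  · rintro ⟨j, hj, d⟩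
    exact Q.saturated' _ hj δ d

end LimitConstr

section Assembly

/-- A morphism of `KD`, seen as a morphism of projectively filtered objects. -/
def khom {A B : KObj D} (f : A ⟶ B) : PHom A.obj.obj B.obj.obj := f.hom.hom

theorem khom_ext {A B : KObj D} {f g : A ⟶ B}
    (h : (khom f).toHom = (khom g).toHom) : f = g :=
  InducedCategory.hom_ext (InducedCategory.hom_ext (PHom.ext' h))

@[simp] theorem khom_comp_toHom {A B C : KObj D} (f : A ⟶ B) (g : B ⟶ C) :
    (khom (f ≫ g)).toHom = (khom f).toHom ≫ (khom g).toHom := rfl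

theorem mono_of_mono_toHom {A B : KObj D} (f : A ⟶ B)
    (h : Mono ((khom f).toHom)) : Mono f := by
  constructor
  intro C g₁ g₂ hgg
  apply khom_ext
  apply h.1
  have : (khom (g₁ ≫ f)).toHom = (khom (g₂ ≫ f)).toHom := by rw [hgg]
  simpa using this

variable [Limits.HasLimits D]

/-- The key factorisation lemma: a morphism of `KD` whose underlying morphism
factors through a monomorphism `m` factors in `KD` through the iso-filtered
object built from the reduction of the pull-back along `m`, by a monomorphism
of `KD`. -/
theorem factor_lemma (E : ECWPData D) (hEM : EMCat D)
    {A B : KObj D} (f : A ⟶ B) {Z : D} (e : A.obj.obj.base ⟶ Z)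
    (m : Z ⟶ B.obj.obj.base) (hm : Mono m) (hfac : e ≫ m = (khom f).toHom) :
    ∃ (g : A ⟶ mkKObj E (redPull hEM m B.obj.obj.filt) (redPull_reduced hEM m _))
      (m' : mkKObj E (redPull hEM m B.obj.obj.filt) (redPull_reduced hEM m _) ⟶ B),
      (khom g).toHom = e ≫ ell E (redPull hEM m B.obj.obj.filt) ∧
      g ≫ m' = f ∧ Mono m' := by
  set R := B.obj.obj.filt with hR
  set Q := redPull hEM m R with hQdef
  have hQ : Q.Reduced := redPull_reduced hEM m R
  obtain hB := Classical.choice B.property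
  -- the underlying morphism of `m'`
  let mcone : Limits.Cone (FiltDiagram R) :=
    { pt := LL E Q
      π :=
        { app := fun b => leg E Q hQ ⟨b.1.1, m ≫ b.1.2⟩ (pull_mem_redPull hEM m R b.2)
          naturality := fun b₁ b₂ u => by
            dsimp [FiltDiagram]
            rw [Category.id_comp]
            exact (leg_fac E Q hQ (pull_mem_redPull hEM m R b₁.2)
              (pull_mem_redPull hEM m R b₂.2) u.1
              (by rw [Category.assoc, u.2])).symm } }
  let m₀ : LL E Q ⟶ B.obj.obj.base := hB.lift mcone
  have hm₀ : ∀ (b : MorFrom B.obj.obj.base) (hb : b ∈ R.carrier),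
      m₀ ≫ b.2 = leg E Q hQ ⟨b.1, m ≫ b.2⟩ (pull_mem_redPull hEM m R hb) :=
    fun b hb => hB.fac mcone ⟨b, hb⟩
  have hellm : ell E Q ≫ m₀ = m := by
    apply hB.hom_ext
    intro b
    show (ell E Q ≫ m₀) ≫ b.1.2 = m ≫ b.1.2
    rw [Category.assoc, hm₀ b.1 b.2]
    exact ell_leg E Q hQ _
  have hmono : Mono m₀ := by
    constructor
    intro V a₁ a₂ ha
    apply (limConeIsLimit E Q hQ).hom_ext
    rintro ⟨δ, hδ⟩
    show a₁ ≫ leg E Q hQ δ hδ = a₂ ≫ leg E Q hQ δ hδ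
    obtain ⟨ε, hεE, ⟨δ', hδ'mem, μ, hμ, hfacμ⟩, u, hu⟩ := id hδ
    obtain ⟨b, hb, rfl⟩ := hδ'mem
    have hεQ : ε ∈ Q.carrier := ⟨ε, hεE, ⟨⟨b.1, m ≫ b.2⟩, ⟨b, hb, rfl⟩, μ, hμ, hfacμ⟩,
      Dom.refl _⟩
    have hlegμ : leg E Q hQ ε hεQ ≫ μ =
        leg E Q hQ ⟨b.1, m ≫ b.2⟩ (pull_mem_redPull hEM m R hb) :=
      leg_fac E Q hQ hεQ _ μ hfacμ
    have h1 : a₁ ≫ leg E Q hQ ε hεQ = a₂ ≫ leg E Q hQ ε hεQ := by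
      apply hμ.1
      rw [Category.assoc, Category.assoc, hlegμ, ← hm₀ b hb,
        ← Category.assoc, ← Category.assoc, ha]
    have hlegu : leg E Q hQ ε hεQ ≫ u = leg E Q hQ δ hδ :=
      leg_fac E Q hQ hεQ hδ u hu
    rw [← hlegu, ← Category.assoc, ← Category.assoc, h1]
  -- the morphism `m'` of `KD`
  refine ⟨⟨⟨⟨e ≫ ell E Q, ?_⟩⟩⟩, ⟨⟨⟨m₀, ?_⟩⟩⟩, rfl, ?_, ?_⟩
  · -- `g` is a morphism of `KD`
    rintro δL ⟨γ, hγ, h, hh⟩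
    have hh' : leg E Q hQ γ hγ ≫ h = δL.2 := hh
    obtain ⟨ε, hεE, ⟨δ', hδ'mem, μ, hμ, hfacμ⟩, u, hu⟩ := id hγ
    obtain ⟨b, hb, rfl⟩ := hδ'mem
    have hfmem : (⟨b.1, (khom f).toHom ≫ b.2⟩ : MorFrom A.obj.obj.base) ∈
        A.obj.obj.filt.carrier := (khom f).mem b hb
    obtain ⟨α, hα, hαE, k, hk⟩ := A.obj.property _ hfmem
    have hsq : (e ≫ ε.2) ≫ μ = α.2 ≫ k := by
      rw [hk, ← hfac, Category.assoc, Category.assoc, hfacμ]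
    obtain ⟨d, hd, -⟩ := hEM.diag α.2 μ (e ≫ ε.2) k hαE hμ hsq
    apply A.obj.obj.filt.saturated' α hα
    refine ⟨d ≫ u ≫ h, ?_⟩
    calc α.2 ≫ d ≫ u ≫ h = (α.2 ≫ d) ≫ u ≫ h := by simp
      _ = (e ≫ ε.2) ≫ u ≫ h := by rw [hd]
      _ = e ≫ (ε.2 ≫ u) ≫ h := by simp
      _ = e ≫ γ.2 ≫ h := by rw [hu]
      _ = e ≫ (ell E Q ≫ leg E Q hQ γ hγ) ≫ h := by rw [ell_leg]
      _ = (e ≫ ell E Q) ≫ leg E Q hQ γ hγ ≫ h := by simp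
      _ = (e ≫ ell E Q) ≫ δL.2 := by rw [hh']
  · -- `m'` is a morphism of `KD`
    intro b hb
    show (⟨b.1, m₀ ≫ b.2⟩ : MorFrom (LL E Q)) ∈ (QL E Q hQ).carrier
    rw [hm₀ b hb]
    exact QL_mem_leg E Q hQ (pull_mem_redPull hEM m R hb)
  · -- `g ≫ m' = f`
    apply khom_ext
    show (e ≫ ell E Q) ≫ m₀ = (khom f).toHom
    rw [Category.assoc, hellm, hfac]
  · -- `m'` is a monomorphism of `KD`
    exact mono_of_mono_toHom _ hmono

end Assembly

/-- `KD` is extremally co-well-powered. -/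
theorem kobj_ecwp [Limits.HasLimits D] [Limits.HasColimits D]
    (hecwp : ECWP D) (hEM : EMCat D) :
    ECWP (KObj D) := by
  classical
  intro A
  let E : ECWPData D := ECWPData.of hecwp
  let Ab : D := A.obj.obj.base
  let Cond : (Σ i : E.idx Ab, Set (E.idx (E.T Ab i))) → Prop := fun q =>
    ∃ (P : ProjFilt (E.T Ab q.1)) (hP : P.Reduced),
      P.carrier = {δ | ∃ j ∈ q.2,
        Dom (⟨E.T (E.T Ab q.1) j, E.e (E.T Ab q.1) j⟩ : MorFrom (E.T Ab q.1)) δ} ∧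
      ∃ g : A ⟶ mkKObj E P hP,
        (khom g).toHom = E.e Ab q.1 ≫ ell E P ∧ ExtremalEpi g
  refine ⟨{q : Σ i : E.idx Ab, Set (E.idx (E.T Ab i)) // Cond q},
    fun p => mkKObj E p.2.choose p.2.choose_spec.choose,
    fun p => p.2.choose_spec.choose_spec.2.choose, ?_, ?_⟩
  · intro p
    exact p.2.choose_spec.choose_spec.2.choose_spec.2
  · intro B f hf
    obtain ⟨Z, e₀, m₀, he₀, hm₀, hfac₀⟩ := hEM.fact (khom f).toHom
    obtain ⟨i, φ₁, hφ₁⟩ := E.cov Ab e₀ he₀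
    have hm₂mono : Mono (φ₁.hom ≫ m₀) := mono_comp _ _
    have hfac₂ : E.e Ab i ≫ (φ₁.hom ≫ m₀) = (khom f).toHom := by
      rw [← Category.assoc, hφ₁, hfac₀]
    obtain ⟨g, m', hg, hgm, hmono⟩ :=
      factor_lemma E hEM f (E.e Ab i) (φ₁.hom ≫ m₀) hm₂mono hfac₂
    have hQ : (redPull hEM (φ₁.hom ≫ m₀) B.obj.obj.filt).Reduced :=
      redPull_reduced hEM _ _
    have hiso : IsIso m' := hf.2 g m' hmono hgm
    have hgE : ExtremalEpi g := extremalEpi_of_comp_iso g m' f hf hiso hgm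
    have hcarr : (redPull hEM (φ₁.hom ≫ m₀) B.obj.obj.filt).carrier =
        {δ | ∃ j ∈ {j : E.idx (E.T Ab i) |
            (⟨E.T (E.T Ab i) j, E.e (E.T Ab i) j⟩ : MorFrom (E.T Ab i)) ∈
              (redPull hEM (φ₁.hom ≫ m₀) B.obj.obj.filt).carrier},
          Dom (⟨E.T (E.T Ab i) j, E.e (E.T Ab i) j⟩ : MorFrom (E.T Ab i)) δ} :=
      carrier_eq_dom_set E _ hQ
    have key : ∀ (P : ProjFilt (E.T Ab i)) (hP : P.Reduced),
        P.carrier = (redPull hEM (φ₁.hom ≫ m₀) B.obj.obj.filt).carrier →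
        ∀ g' : A ⟶ mkKObj E P hP,
          (khom g').toHom = E.e Ab i ≫ ell E P →
          ∃ φ : mkKObj E P hP ≅ B, g' ≫ φ.hom = f := by
      intro P hP hc g' hg'
      have hPQ : P = redPull hEM (φ₁.hom ≫ m₀) B.obj.obj.filt := ProjFilt.ext hc
      subst hPQ
      have hgg : g' = g := khom_ext (by rw [hg', hg])
      refine ⟨asIso m', ?_⟩
      rw [hgg]
      exact hgm
    have cond : Cond ⟨i, {j : E.idx (E.T Ab i) |
        (⟨E.T (E.T Ab i) j, E.e (E.T Ab i) j⟩ : MorFrom (E.T Ab i)) ∈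
          (redPull hEM (φ₁.hom ≫ m₀) B.obj.obj.filt).carrier}⟩ :=
      ⟨redPull hEM (φ₁.hom ≫ m₀) B.obj.obj.filt, hQ, hcarr, g, hg, hgE⟩
    refine ⟨⟨_, cond⟩, ?_⟩
    exact key cond.choose cond.choose_spec.choose
      (by rw [cond.choose_spec.choose_spec.1, ← hcarr])
      cond.choose_spec.choose_spec.2.choose
      cond.choose_spec.choose_spec.2.choose_spec.1

end FilteredCats
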